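/- Let R be an associative unital ring, e ∈ R an idempotent, and S a subset of the centre Z(R) of R. Let I denote the two-sided ideal of R generated by S. Then I ∩ eRe is equal to the two-sided ideal of the (unital, with unit e) ring eRe generated by the set {s·e : s ∈ S}. -/

import Mathlib

variable {R : Type} [Ring R]

/-- The corner `eRe = {e·r·e : r ∈ R}` of a ring `R` at an idempotent `e`,
realized as `{x : R // e * x * e = x}`. -/
def Corner (e : R) : Type _ := {x : R // e * x * e = x}

namespace Corner

variable (e : R) [he : Fact (e * e = e)]

lemma e_mul_coe (x : Corner e) : e * x.1 = x.1 := by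
  conv_lhs => rw [← x.2]
  rw [← mul_assoc, ← mul_assoc, he.out]
  exact x.2

lemma coe_mul_e (x : Corner e) : x.1 * e = x.1 := by
  conv_lhs => rw [← x.2]
  rw [mul_assoc, he.out]
  exact x.2

instance : Add (Corner e) :=
  ⟨fun x y => ⟨x.1 + y.1, by rw [mul_add, add_mul, x.2, y.2]⟩⟩

instance : Zero (Corner e) := ⟨⟨0, by simp⟩⟩

instance : Neg (Corner e) := ⟨fun x => ⟨-x.1, by simpa using x.2⟩⟩

instance : Mul (Corner e) :=
  ⟨fun x y => ⟨x.1 * y.1, by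
    rw [mul_assoc, mul_assoc, coe_mul_e e y, ← mul_assoc, e_mul_coe e x]⟩⟩

/-- The corner ring `eRe` is unital with unit element `e`. -/
instance : One (Corner e) := ⟨⟨e, by rw [he.out, he.out]⟩⟩

/-- The corner `eRe` of a ring at an idempotent `e` is a ring, with multiplication
inherited from `R` and unit element `e`. -/
instance instRing : Ring (Corner e) where
  nsmul n x := ⟨n • x.1, by rw [mul_smul_comm, smul_mul_assoc, x.2]⟩
  zsmul z x := ⟨z • x.1, by rw [mul_smul_comm, smul_mul_assoc, x.2]⟩
  nsmul_zero x := Subtype.ext (zero_nsmul x.1)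
  nsmul_succ n x := Subtype.ext (succ_nsmul x.1 n)
  zsmul_zero' x := Subtype.ext (zero_zsmul x.1)
  zsmul_succ' n x := Subtype.ext
    (show (Int.ofNat (n + 1)) • x.1 = Int.ofNat n • x.1 + x.1 by simp [add_zsmul]; noncomm_ring)
  zsmul_neg' n x := Subtype.ext
    (show (Int.negSucc n) • x.1 = -((n.succ : ℤ) • x.1) by simp [negSucc_zsmul]; noncomm_ring)
  add_assoc a b c := Subtype.ext (add_assoc a.1 b.1 c.1)
  zero_add a := Subtype.ext (zero_add a.1)
  add_zero a := Subtype.ext (add_zero a.1)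
  add_comm a b := Subtype.ext (add_comm a.1 b.1)
  neg_add_cancel a := Subtype.ext (neg_add_cancel a.1)
  mul_assoc a b c := Subtype.ext (mul_assoc a.1 b.1 c.1)
  one_mul a := Subtype.ext (e_mul_coe e a)
  mul_one a := Subtype.ext (coe_mul_e e a)
  left_distrib a b c := Subtype.ext (mul_add a.1 b.1 c.1)
  right_distrib a b c := Subtype.ext (add_mul a.1 b.1 c.1)
  zero_mul a := Subtype.ext (zero_mul a.1)
  mul_zero a := Subtype.ext (mul_zero a.1)

end Corner

section Helpers
variable (e : R) [hef : Fact (e * e = e)]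

/-- Auxiliary: map `r ↦ e r e` into the corner. -/
def toC (r : R) : Corner e :=
  ⟨e * r * e, by
    rw [← mul_assoc, ← mul_assoc, hef.out, mul_assoc, mul_assoc, hef.out, ← mul_assoc]⟩

lemma toC_coe (r : R) : (toC e r).1 = e * r * e := rfl

lemma toC_add (a b : R) : toC e (a + b) = toC e a + toC e b :=
  Subtype.ext (show e * (a + b) * e = e * a * e + e * b * e by noncomm_ring)

lemma toC_zero : toC e 0 = 0 :=
  Subtype.ext (show e * 0 * e = 0 by simp)

lemma toC_neg (a : R) : toC e (-a) = -toC e a :=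
  Subtype.ext (show e * (-a) * e = -(e * a * e) by noncomm_ring)

end Helpers

open Pointwise in
/-- Let `R` be a ring, `e ∈ R` an idempotent and `S` a subset of the
centre of `R`. Let `I` be the two-sided ideal of `R` generated by `S`. Then `I ∩ eRe`
equals the two-sided ideal of the corner ring `eRe` generated by `{s·e : s ∈ S}`. -/
theorem statement7 (e : R) (he : e * e = e) (S : Set R) (hS : S ⊆ Set.center R) :
    haveI : Fact (e * e = e) := ⟨he⟩
    ∀ x : Corner e,
      x.1 ∈ TwoSidedIdeal.span S ↔
        x ∈ TwoSidedIdeal.span {y : Corner e | ∃ s ∈ S, y.1 = s * e} := by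
  haveI : Fact (e * e = e) := ⟨he⟩
  set T : Set (Corner e) := {y : Corner e | ∃ s ∈ S, y.1 = s * e} with hT
  intro x
  constructor
  · intro hx
    rw [TwoSidedIdeal.mem_span_iff_mem_addSubgroup_closure] at hx
    have key : ∀ r : R, r ∈ AddSubgroup.closure (Set.univ * S * Set.univ) →
        toC e r ∈ TwoSidedIdeal.span T := by
      intro r hr
      induction hr using AddSubgroup.closure_induction with
      | mem z hz =>
        obtain ⟨u, ⟨a, -, s, hs, rfl⟩, b, -, rfl⟩ := hz
        have hcen := hS hs
        have hcomm : ∀ t : R, s * t = t * s := fun t => (Set.mem_center_iff.mp hcen).comm t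
        have pf : e * (s * e) * e = s * e := by
          calc e * (s * e) * e = (e * s) * (e * e) := by noncomm_ring
            _ = (s * e) * (e * e) := by rw [← hcomm e]
            _ = s * e := by rw [he, mul_assoc, he]
        have hgen : (⟨s * e, pf⟩ : Corner e) ∈ T := ⟨s, hs, rfl⟩
        have h1 : toC e (a * s * b) = toC e (a * b) * ⟨s * e, pf⟩ := by
          apply Subtype.ext
          show e * (a * s * b) * e = (e * (a * b) * e) * (s * e)
          have h2 : a * s * b = a * b * s := by rw [mul_assoc, hcomm b, ← mul_assoc]
          calc e * (a * s * b) * e = e * (a * b * s) * e := by rw [h2]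
            _ = (e * (a * b)) * (s * (e * e)) := by rw [he]; noncomm_ring
            _ = (e * (a * b)) * ((e * s) * e) := by rw [← hcomm e]; noncomm_ring
            _ = (e * (a * b) * e) * (s * e) := by noncomm_ring
        rw [h1]
        exact TwoSidedIdeal.mul_mem_left _ _ _ (TwoSidedIdeal.subset_span hgen)
      | zero =>
        rw [toC_zero]; exact TwoSidedIdeal.zero_mem _
      | add a b _ _ ha hb =>
        rw [toC_add]; exact TwoSidedIdeal.add_mem _ ha hb
      | neg a _ ha =>
        rw [toC_neg]; exact TwoSidedIdeal.neg_mem _ ha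
    have hkey := key x.1 hx
    have hx2 : toC e x.1 = x := Subtype.ext x.2
    rwa [hx2] at hkey
  · intro hx
    set K : TwoSidedIdeal (Corner e) := TwoSidedIdeal.mk'
      {y : Corner e | y.1 ∈ TwoSidedIdeal.span S}
      (show ((0 : Corner e)).1 ∈ TwoSidedIdeal.span S from TwoSidedIdeal.zero_mem _)
      (fun {a b} h1 h2 => show (a + b).1 ∈ TwoSidedIdeal.span S from
        TwoSidedIdeal.add_mem _ h1 h2)
      (fun {a} h1 => show (-a).1 ∈ TwoSidedIdeal.span S from TwoSidedIdeal.neg_mem _ h1)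
      (fun {a b} h1 => show (a * b).1 ∈ TwoSidedIdeal.span S from
        TwoSidedIdeal.mul_mem_left _ a.1 b.1 h1)
      (fun {a b} h1 => show (a * b).1 ∈ TwoSidedIdeal.span S from
        TwoSidedIdeal.mul_mem_right _ a.1 b.1 h1) with hK
    have hTK : T ⊆ K := by
      rintro y ⟨s, hs, hy⟩
      rw [SetLike.mem_coe, hK, TwoSidedIdeal.mem_mk']
      show y.1 ∈ TwoSidedIdeal.span S
      rw [hy]
      exact TwoSidedIdeal.mul_mem_right _ _ _ (TwoSidedIdeal.subset_span hs)
    have hfin := TwoSidedIdeal.mem_span_iff.mp hx K hTK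
    rw [hK, TwoSidedIdeal.mem_mk'] at hfin
    exact hfin
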